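/- Let m be a positive integer, let J be the real diagonal matrix of size m + 1 with diagonal entries (1, −1, −1, …, −1), and let g be a real (m+1) × (m+1) matrix satisfying gᵀ J g = J. Then the characteristic polynomial of g has at most one complex root z (counted with multiplicity) with |z| > 1. -/

import Mathlib

open Polynomial Matrix

namespace AtMostOneAux

variable {F : Type*} [Field F] {n : ℕ}

/-- The Lorentz bilinear form of signature (1, n). -/
def lorB (x y : Fin (n + 1) → F) : F :=
  x 0 * y 0 - ∑ i : Fin n, x i.succ * y i.succ

/-- The matrix of the Lorentz form. -/
def lorJ (n : ℕ) (F : Type*) [Field F] : Matrix (Fin (n + 1)) (Fin (n + 1)) F :=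
  Matrix.diagonal (fun i => if i = 0 then (1 : F) else -1)

lemma lorB_eq (x y : Fin (n + 1) → F) :
    lorB x y = x ⬝ᵥ ((lorJ n F) *ᵥ y) := by
  simp [lorB, lorJ, dotProduct, mulVec_diagonal, Fin.sum_univ_succ, Fin.succ_ne_zero,
    sub_eq_add_neg]

lemma lorB_comm (x y : Fin (n + 1) → F) : lorB x y = lorB y x := by
  simp only [lorB, mul_comm]

lemma lorB_smul_left (c : F) (x y : Fin (n + 1) → F) : lorB (c • x) y = c * lorB x y := by
  simp only [lorB, Pi.smul_apply, smul_eq_mul, mul_sub, Finset.mul_sum, mul_assoc]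

lemma lorB_smul_right (c : F) (x y : Fin (n + 1) → F) : lorB x (c • y) = c * lorB x y := by
  rw [lorB_comm, lorB_smul_left, lorB_comm]

lemma lorB_add_left (x x' y : Fin (n + 1) → F) :
    lorB (x + x') y = lorB x y + lorB x' y := by
  simp only [lorB, Pi.add_apply, add_mul, Finset.sum_add_distrib, add_sub_add_comm]

lemma lorB_add_right (x y y' : Fin (n + 1) → F) :
    lorB x (y + y') = lorB x y + lorB x y' := by
  rw [lorB_comm, lorB_add_left, lorB_comm y x, lorB_comm y' x]

@[simp] lemma lorB_zero_left (y : Fin (n + 1) → F) : lorB 0 y = 0 := by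
  simp [lorB]

lemma dot_consistency (A Jm : Matrix (Fin (n + 1)) (Fin (n + 1)) F) (x y : Fin (n + 1) → F) :
    (A *ᵥ x) ⬝ᵥ (Jm *ᵥ (A *ᵥ y)) = x ⬝ᵥ ((Aᵀ * Jm * A) *ᵥ y) := by
  rw [mulVec_mulVec, dotProduct_mulVec, dotProduct_mulVec, vecMul_mulVec, Matrix.mul_assoc]

lemma lorB_mulVec {M : Matrix (Fin (n + 1)) (Fin (n + 1)) F}
    (hM : Mᵀ * lorJ n F * M = lorJ n F) (x y : Fin (n + 1) → F) :
    lorB (M *ᵥ x) (M *ᵥ y) = lorB x y := by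
  rw [lorB_eq, lorB_eq, dot_consistency, hM]

lemma not_isotropic_pair {n : ℕ} (u v : Fin (n + 1) → ℝ) (hv : v ≠ 0)
    (hind : ∀ c : ℝ, u ≠ c • v) (huu : lorB u u = 0) (huv : lorB u v = 0)
    (hvv : lorB v v = 0) : False := by
  have hu : u ≠ 0 := fun h => hind 0 (by simp [h])
  have key : ∀ w : Fin (n + 1) → ℝ, lorB w w = 0 → w 0 = 0 → w = 0 := by
    intro w hw h0
    have hsum : ∑ i : Fin n, w i.succ * w i.succ = 0 := by
      have : (0:ℝ) - ∑ i : Fin n, w i.succ * w i.succ = 0 := by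
        simpa [lorB, h0] using hw
      linarith
    have hz : ∀ i ∈ Finset.univ, w (Fin.succ i) * w (Fin.succ i) = 0 :=
      (Finset.sum_eq_zero_iff_of_nonneg (fun i _ => mul_self_nonneg (w i.succ))).mp hsum
    funext j
    refine Fin.cases h0 (fun i => ?_) j
    exact mul_self_eq_zero.mp (hz i (Finset.mem_univ i))
  have hu0 : u 0 ≠ 0 := fun h => hu (key u huu h)
  have hv0 : v 0 ≠ 0 := fun h => hv (key v hvv h)
  set w : Fin (n + 1) → ℝ := v 0 • u - u 0 • v with hwdef
  have hw0 : w 0 = 0 := by simp [hwdef]; ring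
  have hvu : lorB v u = 0 := (lorB_comm v u).trans huv
  have hww : lorB w w = 0 := by
    rw [hwdef, sub_eq_add_neg, ← neg_smul]
    rw [lorB_add_left, lorB_add_right, lorB_add_right]
    simp only [lorB_smul_left, lorB_smul_right, huu, huv, hvv, hvu]
    ring
  have hw : w = 0 := key w hww hw0
  have heq : v 0 • u = u 0 • v := by rwa [hwdef, sub_eq_zero] at hw
  refine hind ((v 0)⁻¹ * u 0) ?_
  rw [mul_smul, ← heq, inv_smul_smul₀ hv0]

lemma charpoly_eval {N : Type*} [Fintype N] [DecidableEq N] (M : Matrix N N F) (t : F) :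
    M.charpoly.eval t = (t • (1 : Matrix N N F) - M).det := by
  rw [Matrix.charpoly, eval_det, Matrix.matPolyEquiv_charmatrix]
  simp [smul_one_eq_diagonal]

lemma exists_eigenvector {k : ℕ} (M : Matrix (Fin k) (Fin k) F) {t : F}
    (h : M.charpoly.IsRoot t) : ∃ x, x ≠ 0 ∧ M *ᵥ x = t • x := by
  have hdet : (t • (1 : Matrix (Fin k) (Fin k) F) - M).det = 0 := by
    rw [← charpoly_eval]; exact h
  obtain ⟨x, hx0, hx⟩ := Matrix.exists_mulVec_eq_zero_iff.mpr hdet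
  refine ⟨x, hx0, ?_⟩
  rw [sub_mulVec, smul_mulVec, one_mulVec, sub_eq_zero] at hx
  exact hx.symm

end AtMostOneAux
namespace AtMostOneAux

section Cases

variable {m : ℕ}

lemma lorJ_map (n : ℕ) : (lorJ n ℝ).map (algebraMap ℝ ℂ) = lorJ n ℂ := by
  rw [lorJ, lorJ, Matrix.diagonal_map (map_zero _)]
  congr 1
  funext i
  simp [apply_ite (algebraMap ℝ ℂ)]

lemma hg_map {g : Matrix (Fin (m + 1)) (Fin (m + 1)) ℝ}
    (hg : gᵀ * lorJ m ℝ * g = lorJ m ℝ) :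
    (g.map (algebraMap ℝ ℂ))ᵀ * lorJ m ℂ * g.map (algebraMap ℝ ℂ) = lorJ m ℂ := by
  have h := congrArg (fun M : Matrix (Fin (m + 1)) (Fin (m + 1)) ℝ =>
    M.map (algebraMap ℝ ℂ : ℝ →+* ℂ)) hg
  simpa only [Matrix.map_mul, Matrix.transpose_map, lorJ_map] using h

lemma ofReal_mulVec (g : Matrix (Fin (m + 1)) (Fin (m + 1)) ℝ) (y : Fin (m + 1) → ℝ) :
    (g.map (algebraMap ℝ ℂ)) *ᵥ (fun i => (y i : ℂ)) = fun i => ((g *ᵥ y) i : ℂ) := by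
  funext i
  simp [Matrix.mulVec, dotProduct, Matrix.map_apply]

lemma conj_mulVec (g : Matrix (Fin (m + 1)) (Fin (m + 1)) ℝ) (x : Fin (m + 1) → ℂ) :
    (g.map (algebraMap ℝ ℂ)) *ᵥ (fun i => starRingEnd ℂ (x i)) =
      fun i => starRingEnd ℂ (((g.map (algebraMap ℝ ℂ)) *ᵥ x) i) := by
  funext i
  simp [Matrix.mulVec, dotProduct, Matrix.map_apply, map_sum, _root_.map_mul,
    Complex.conj_ofReal]

lemma nonreal_case (g : Matrix (Fin (m + 1)) (Fin (m + 1)) ℝ)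
    (hg : gᵀ * lorJ m ℝ * g = lorJ m ℝ) {z : ℂ}
    (hz : z ∈ (g.charpoly.map (algebraMap ℝ ℂ)).roots)
    (habs : 1 < ‖z‖) (him : z.im ≠ 0) : False := by
  set gc := g.map (algebraMap ℝ ℂ) with hgc
  have hroot : gc.charpoly.IsRoot z := by
    rw [hgc, Matrix.charpoly_map]
    exact isRoot_of_mem_roots hz
  obtain ⟨x, hx0, hxe⟩ := exists_eigenvector gc hroot
  have hinv := lorB_mulVec (hg_map hg)
  -- z * z ≠ 1 and z * conj z ≠ 1
  have hzz : z * z ≠ 1 := by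
    intro h
    have : ‖z * z‖ = 1 := by rw [h]; simp
    rw [norm_mul] at this
    nlinarith
  have hzzb : z * starRingEnd ℂ z ≠ 1 := by
    intro h
    have : ‖z * starRingEnd ℂ z‖ = 1 := by rw [h]; simp
    rw [norm_mul, Complex.norm_conj] at this
    nlinarith
  -- B x x = 0
  have hBxx : lorB x x = 0 := by
    have h1 : lorB x x = (z * z) * lorB x x := by
      conv_lhs => rw [← hinv x x]
      rw [hxe, lorB_smul_left, lorB_smul_right]; ring
    have h2 : (z * z - 1) * lorB x x = 0 := by linear_combination h1.symm
    rcases mul_eq_zero.mp h2 with h | h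
    · exact absurd (by linear_combination h) hzz
    · exact h
  -- conjugate eigenvector
  set xb : Fin (m + 1) → ℂ := fun i => starRingEnd ℂ (x i) with hxb
  have hxbe : gc *ᵥ xb = starRingEnd ℂ z • xb := by
    rw [hxb, conj_mulVec, hxe]
    funext i
    simp [_root_.map_mul]
  have hBxxb : lorB x xb = 0 := by
    have h1 : lorB x xb = (z * starRingEnd ℂ z) * lorB x xb := by
      conv_lhs => rw [← hinv x xb]
      rw [hxe, hxbe, lorB_smul_left, lorB_smul_right]; ring
    have h2 : (z * starRingEnd ℂ z - 1) * lorB x xb = 0 := by linear_combination h1.symm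
    rcases mul_eq_zero.mp h2 with h | h
    · exact absurd (by linear_combination h) hzzb
    · exact h
  -- real and imaginary parts
  set u : Fin (m + 1) → ℝ := fun i => (x i).re with hu
  set w : Fin (m + 1) → ℝ := fun i => (x i).im with hw
  have e1 : (lorB x x).re = lorB u u - lorB w w := by
    simp only [lorB, Complex.sub_re, Complex.mul_re, Complex.re_sum, Finset.sum_sub_distrib,
      hu, hw]
    ring
  have e2 : (lorB x x).im = lorB u w + lorB w u := by
    simp only [lorB, Complex.sub_im, Complex.mul_im, Complex.im_sum, Finset.sum_add_distrib,
      hu, hw]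
    ring
  have e3 : (lorB x xb).re = lorB u u + lorB w w := by
    simp only [lorB, hxb, Complex.sub_re, Complex.mul_re, Complex.re_sum, Complex.conj_re,
      Complex.conj_im, Finset.sum_add_distrib, hu, hw, mul_neg, sub_neg_eq_add]
    ring
  rw [hBxx] at e1 e2
  rw [hBxxb] at e3
  simp only [Complex.zero_re, Complex.zero_im] at e1 e2 e3
  have huw : lorB u w = 0 := by
    have := lorB_comm u w
    -- e2 : 0 = lorB u w + lorB w u
    rw [← this] at e2
    linarith [e2.symm]
  have huu : lorB u u = 0 := by linarith [e1.symm, e3.symm]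
  have hww : lorB w w = 0 := by linarith [e1.symm, e3.symm]
  -- real eigenvector impossibility
  have hrv : ∀ y : Fin (m + 1) → ℝ, y ≠ 0 →
      gc *ᵥ (fun i => (y i : ℂ)) = z • (fun i => (y i : ℂ)) → False := by
    intro y hy he
    obtain ⟨i, hi⟩ := Function.ne_iff.mp hy
    have h1 := congrFun he i
    rw [hgc, ofReal_mulVec] at h1
    have h2 := congrArg Complex.im h1
    simp [Complex.mul_im] at h2
    rcases h2 with h | h
    · exact him h
    · exact hi h
  -- w ≠ 0
  have hwnz : w ≠ 0 := by
    intro h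
    have hxu : (fun i => ((u i : ℝ) : ℂ)) = x := by
      funext i
      rw [← Complex.re_add_im (x i)]
      have : w i = 0 := congrFun h i
      simp only [hw] at this
      simp [hu, this]
    have hun : u ≠ 0 := by
      intro h0
      apply hx0
      funext i
      rw [← hxu]
      simp [congrFun h0 i]
    exact hrv u hun (by rw [hxu]; exact hxe)
  -- no proportionality
  have hind : ∀ c : ℝ, u ≠ c • w := by
    intro c hc
    have hxw : x = ((c : ℂ) + Complex.I) • (fun i => (w i : ℂ)) := by
      funext i
      rw [← Complex.re_add_im (x i)]
      have h1 : u i = c * w i := congrFun hc i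
      simp only [hu] at h1
      simp only [Pi.smul_apply, smul_eq_mul, hw]
      rw [h1]
      push_cast
      ring
    have hcne : ((c : ℂ) + Complex.I) ≠ 0 := by
      intro h
      have := congrArg Complex.im h
      simp at this
    have he2 : gc *ᵥ (fun i => (w i : ℂ)) = z • (fun i => (w i : ℂ)) := by
      have h3 : gc *ᵥ x = ((c : ℂ) + Complex.I) • (gc *ᵥ (fun i => (w i : ℂ))) := by
        rw [hxw, mulVec_smul]
      rw [hxe, hxw, smul_comm] at h3
      exact (smul_right_injective _ hcne h3).symm
    exact hrv w hwnz he2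
  exact not_isotropic_pair u w hwnz hind huu huw hww

lemma real_case {m : ℕ} (g : Matrix (Fin (m + 1)) (Fin (m + 1)) ℝ)
    (hg : gᵀ * lorJ m ℝ * g = lorJ m ℝ) {a b : ℝ}
    (ha : g.charpoly.IsRoot a) (hb : g.charpoly.IsRoot b)
    (haabs : 1 < |a|) (hbabs : 1 < |b|) (hne : a ≠ b) : False := by
  obtain ⟨u, hu0, hue⟩ := exists_eigenvector g ha
  obtain ⟨v, hv0, hve⟩ := exists_eigenvector g hb
  have hinv := lorB_mulVec hg
  have haa : a * a ≠ 1 := by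
    intro h; nlinarith [abs_mul_abs_self a]
  have hbb : b * b ≠ 1 := by
    intro h; nlinarith [abs_mul_abs_self b]
  have hab : a * b ≠ 1 := by
    intro h
    have h1 : |a| * |b| = 1 := by rw [← abs_mul, h, abs_one]
    nlinarith
  have hsq : ∀ (c d : ℝ) (x y : Fin (m + 1) → ℝ), g *ᵥ x = c • x → g *ᵥ y = d • y →
      c * d ≠ 1 → lorB x y = 0 := by
    intro c d x y hx hy hcd
    have h1 : lorB x y = (c * d) * lorB x y := by
      conv_lhs => rw [← hinv x y]
      rw [hx, hy, lorB_smul_left, lorB_smul_right]; ring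
    have h2 : (c * d - 1) * lorB x y = 0 := by linear_combination h1.symm
    rcases mul_eq_zero.mp h2 with h | h
    · exact absurd (by linear_combination h) hcd
    · exact h
  have huu : lorB u u = 0 := hsq a a u u hue hue haa
  have hvv : lorB v v = 0 := hsq b b v v hve hve hbb
  have huv : lorB u v = 0 := hsq a b u v hue hve hab
  have hind : ∀ c : ℝ, u ≠ c • v := by
    intro c hc
    have h1 : g *ᵥ (c • v) = a • (c • v) := by rw [← hc]; exact hue
    rw [mulVec_smul, hve, smul_smul, smul_smul, mul_comm a c] at h1
    have h2 : (c * b - c * a) • v = 0 := by rw [sub_smul, h1, sub_self]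
    rcases smul_eq_zero.mp h2 with h | h
    · have h3 : c * (b - a) = 0 := by linear_combination h
      rcases mul_eq_zero.mp h3 with h4 | h4
      · apply hu0; rw [hc, h4, zero_smul]
      · exact hne (by linarith)
    · exact hv0 h
  exact not_isotropic_pair u v hv0 hind huu huv hvv

lemma double_case {m : ℕ} (g : Matrix (Fin (m + 1)) (Fin (m + 1)) ℝ)
    (hg : gᵀ * lorJ m ℝ * g = lorJ m ℝ) {lam : ℝ}
    (h2 : 2 ≤ g.charpoly.rootMultiplicity lam) (habs : 1 < |lam|) : False := by
  classical
  set N : Matrix (Fin (m + 1)) (Fin (m + 1)) ℝ := g - lam • 1 with hN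
  set σ : ℝ[X] →+* ℝ[X] := eval₂RingHom Polynomial.C (X + Polynomial.C lam) with hσ
  have hσX : σ X = X + Polynomial.C lam := eval₂_X _ _
  have hσC : ∀ r : ℝ, σ (Polynomial.C r) = Polynomial.C r := fun r => eval₂_C _ _
  have hchar : N.charpoly = σ g.charpoly := by
    rw [Matrix.charpoly, Matrix.charpoly, RingHom.map_det]
    congr 1
    ext i j
    by_cases h : i = j
    · subst h
      rw [RingHom.mapMatrix_apply, Matrix.map_apply, charmatrix_apply_eq, charmatrix_apply_eq,
        map_sub, hσX, hσC, hN, Matrix.sub_apply, Matrix.smul_apply, Matrix.one_apply_eq,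
        smul_eq_mul, mul_one, Polynomial.C_sub]
      ring
    · rw [RingHom.mapMatrix_apply, Matrix.map_apply, charmatrix_apply_ne _ _ _ h,
        charmatrix_apply_ne _ _ _ h, map_neg, hσC, hN, Matrix.sub_apply, Matrix.smul_apply,
        Matrix.one_apply_ne h, smul_eq_mul, mul_zero, sub_zero]
  have hdvd2 : (X - Polynomial.C lam) ^ 2 ∣ g.charpoly :=
    (pow_dvd_pow _ h2).trans (pow_rootMultiplicity_dvd _ _)
  have hXdvd : X ^ 2 ∣ N.charpoly := by
    obtain ⟨t, ht⟩ := hdvd2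
    rw [hchar, ht, _root_.map_mul, _root_.map_pow, _root_.map_sub, hσX, hσC]
    exact ⟨σ t, by rw [add_sub_cancel_right]⟩
  have hne0 : N.charpoly ≠ 0 := N.charpoly_monic.ne_zero
  have htd : 2 ≤ N.charpoly.natTrailingDegree :=
    le_natTrailingDegree hne0 (fun i hi => X_pow_dvd_iff.mp hXdvd i hi)
  set φ : Module.End ℝ (Fin (m + 1) → ℝ) := Matrix.toLin' N with hφ
  have hφpow : ∀ (k : ℕ) (x : Fin (m + 1) → ℝ), (φ ^ k) x = (N ^ k) *ᵥ x := by
    intro k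
    induction k with
    | zero => intro x; simp
    | succ k ih =>
      intro x
      rw [pow_succ', Module.End.mul_apply]
      have h1 : ∀ y : Fin (m + 1) → ℝ, φ y = N *ᵥ y := fun y => by
        rw [hφ, Matrix.toLin'_apply]
      rw [ih, h1, mulVec_mulVec, ← pow_succ']
  have hφchar : φ.charpoly = N.charpoly := by
    rw [← LinearMap.charpoly_toMatrix φ (Pi.basisFun ℝ (Fin (m + 1)))]
    congr 1
    rw [LinearMap.toMatrix_eq_toMatrix', hφ, LinearMap.toMatrix'_toLin']
  have hfr : 2 ≤ Module.finrank ℝ (φ.maxGenEigenspace 0) := by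
    rw [LinearMap.finrank_maxGenEigenspace_zero_eq, hφchar]; exact htd
  obtain ⟨fv, hfv⟩ := exists_linearIndependent_of_le_finrank hfr
  have hker : ∀ x : Fin (m + 1) → ℝ, x ∈ φ.maxGenEigenspace 0 →
      ∃ k, (N ^ k) *ᵥ x = 0 := by
    intro x hx
    rw [Module.End.mem_maxGenEigenspace] at hx
    obtain ⟨k, hk⟩ := hx
    refine ⟨k, ?_⟩
    rw [← hφpow k x]
    simpa using hk
  have hll : lam * lam ≠ 1 := by intro h; nlinarith [abs_mul_abs_self lam]
  have hgx : ∀ x : Fin (m + 1) → ℝ, g *ᵥ x = N *ᵥ x + lam • x := by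
    intro x
    rw [hN, sub_mulVec, smul_mulVec, one_mulVec, sub_add_cancel]
  have key : ∀ s j k : ℕ, j + k ≤ s → ∀ x y : Fin (m + 1) → ℝ,
      (N ^ j) *ᵥ x = 0 → (N ^ k) *ᵥ y = 0 → lorB x y = 0 := by
    intro s
    induction s with
    | zero =>
      intro j k hjk x y hx hy
      have hj : j = 0 := by omega
      subst hj
      rw [pow_zero, one_mulVec] at hx
      rw [hx]; exact lorB_zero_left y
    | succ s ih =>
      intro j k hjk x y hx hy
      match j, k with
      | 0, k =>
        rw [pow_zero, one_mulVec] at hx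
        rw [hx]; exact lorB_zero_left y
      | j + 1, 0 =>
        rw [pow_zero, one_mulVec] at hy
        rw [hy, lorB_comm]; exact lorB_zero_left x
      | j + 1, k + 1 =>
        have hNx : (N ^ j) *ᵥ (N *ᵥ x) = 0 := by rw [mulVec_mulVec, ← pow_succ]; exact hx
        have hNy : (N ^ k) *ᵥ (N *ᵥ y) = 0 := by rw [mulVec_mulVec, ← pow_succ]; exact hy
        have e0 : lorB (N *ᵥ x) (N *ᵥ y) = 0 := ih j k (by omega) _ _ hNx hNy
        have e1 : lorB (N *ᵥ x) y = 0 := ih j (k + 1) (by omega) _ _ hNx hy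
        have e2 : lorB x (N *ᵥ y) = 0 := ih (j + 1) k (by omega) _ _ hx hNy
        have h1 : lorB x y = (lam * lam) * lorB x y := by
          conv_lhs => rw [← lorB_mulVec hg x y]
          rw [hgx x, hgx y]
          simp only [lorB_add_left, lorB_add_right, lorB_smul_left, lorB_smul_right, e0, e1, e2]
          ring
        have hz : (lam * lam - 1) * lorB x y = 0 := by linear_combination h1.symm
        rcases mul_eq_zero.mp hz with h | h
        · exact absurd (by linear_combination h) hll
        · exact h
  set u := (fv 0 : Fin (m + 1) → ℝ) with hu
  set v := (fv 1 : Fin (m + 1) → ℝ) with hv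
  have hvne : v ≠ 0 := by
    intro h
    exact hfv.ne_zero 1 (Subtype.ext h)
  have hind : ∀ c : ℝ, u ≠ c • v := by
    intro c hc
    have hsub : fv 0 = c • fv 1 := Subtype.ext (by rw [Submodule.coe_smul]; exact hc)
    have hli := Fintype.linearIndependent_iff.mp hfv ![1, -c]
      (by
        rw [Fin.sum_univ_two]
        simp only [Matrix.cons_val_zero, Matrix.cons_val_one, Matrix.head_cons, one_smul,
          neg_smul]
        rw [hsub, add_neg_cancel]) 0
    simp at hli
  obtain ⟨k1, hk1⟩ := hker u (fv 0).2
  obtain ⟨k2, hk2⟩ := hker v (fv 1).2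
  exact not_isotropic_pair u v hvne hind
    (key (k1 + k1) k1 k1 le_rfl u u hk1 hk1)
    (key (k1 + k2) k1 k2 le_rfl u v hk1 hk2)
    (key (k2 + k2) k2 k2 le_rfl v v hk2 hk2)

end Cases

end AtMostOneAux


/-- An element `g` of the real orthogonal group `O(1, m)` has at most one eigenvalue
(counted with multiplicity) outside the unit circle. -/
theorem at_most_one_root_outside_unit_circle
    (m : ℕ) (hm : 0 < m)
    (J : Matrix (Fin (m + 1)) (Fin (m + 1)) ℝ)
    (hJ : J = Matrix.diagonal (fun i => if i = 0 then (1 : ℝ) else -1))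
    (g : Matrix (Fin (m + 1)) (Fin (m + 1)) ℝ)
    (hg : g.transpose * J * g = J) :
    Multiset.card
      (((g.charpoly.map (algebraMap ℝ ℂ)).roots).filter fun z => 1 < ‖z‖) ≤ 1 := by
  classical
  by_contra hcard
  push_neg at hcard
  have hg' : gᵀ * AtMostOneAux.lorJ m ℝ * g = AtMostOneAux.lorJ m ℝ := by
    rw [AtMostOneAux.lorJ, ← hJ]; exact hg
  set P := g.charpoly.map (algebraMap ℝ ℂ) with hP
  set Fl := P.roots.filter (fun z => 1 < ‖z‖) with hFl
  have h2 : 2 ≤ Multiset.card Fl := hcard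
  have hFlne : Fl ≠ 0 := by
    intro h; rw [h] at h2; simp at h2
  obtain ⟨a, ha⟩ := Multiset.exists_mem_of_ne_zero hFlne
  obtain ⟨t, ht⟩ := Multiset.exists_cons_of_mem ha
  have h1t : t ≠ 0 := by
    intro h
    rw [ht, h] at h2
    simp at h2
  obtain ⟨b, hb⟩ := Multiset.exists_mem_of_ne_zero h1t
  have hbF : b ∈ Fl := by rw [ht]; exact Multiset.mem_cons_of_mem hb
  have haR : a ∈ P.roots := (Multiset.mem_filter.mp ha).1
  have hbR : b ∈ P.roots := (Multiset.mem_filter.mp hbF).1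
  have haabs : 1 < ‖a‖ := (Multiset.mem_filter.mp ha).2
  have hbabs : 1 < ‖b‖ := (Multiset.mem_filter.mp hbF).2
  -- case: some root nonreal
  by_cases hima : a.im ≠ 0
  · exact AtMostOneAux.nonreal_case g hg' haR haabs hima
  by_cases himb : b.im ≠ 0
  · exact AtMostOneAux.nonreal_case g hg' hbR hbabs himb
  push_neg at hima himb
  -- both real
  have hae : a = ((a.re : ℝ) : ℂ) := by
    apply Complex.ext <;> simp [hima]
  have hbe : b = ((b.re : ℝ) : ℂ) := by
    apply Complex.ext <;> simp [himb]
  have haroot : g.charpoly.IsRoot a.re := by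
    have h := isRoot_of_mem_roots haR
    rw [IsRoot, hP, eval_map, hae, ← Complex.coe_algebraMap, eval₂_at_apply,
      Complex.coe_algebraMap] at h
    exact_mod_cast h
  have hbroot : g.charpoly.IsRoot b.re := by
    have h := isRoot_of_mem_roots hbR
    rw [IsRoot, hP, eval_map, hbe, ← Complex.coe_algebraMap, eval₂_at_apply,
      Complex.coe_algebraMap] at h
    exact_mod_cast h
  have haabs' : 1 < |a.re| := by
    rw [hae, Complex.norm_real, Real.norm_eq_abs] at haabs; exact haabs
  have hbabs' : 1 < |b.re| := by
    rw [hbe, Complex.norm_real, Real.norm_eq_abs] at hbabs; exact hbabs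
  by_cases hne : a.re = b.re
  · -- double root
    have hab : a = b := by rw [hae, hbe, hne]
    have hcount : 2 ≤ P.roots.count a := by
      have hc1 : 2 ≤ Fl.count a := by
        rw [ht]
        rw [Multiset.count_cons_self]
        have : 1 ≤ t.count a := by
          rw [Multiset.one_le_count_iff_mem, hab]; exact hb
        omega
      calc 2 ≤ Fl.count a := hc1
        _ ≤ P.roots.count a := Multiset.count_le_of_le a (Multiset.filter_le _ _)
    have hmult : 2 ≤ g.charpoly.rootMultiplicity a.re := by
      have hc := hcount
      rw [Polynomial.count_roots] at hc
      rw [Polynomial.eq_rootMultiplicity_map (f := algebraMap ℝ ℂ)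
        (algebraMap ℝ ℂ).injective a.re, Complex.coe_algebraMap, ← hae, ← hP]
      exact hc
    exact AtMostOneAux.double_case g hg' hmult haabs'
  · exact AtMostOneAux.real_case g hg' haroot hbroot haabs' hbabs' hne
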